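/- (Inner simplex approximation.) Fix a ∈ Fin 2 and c ∈ Fin K and assume μ{Y = y, A = a, C = c} > 0 for every y ∈ Fin N. Let s_y = μ{Y = y, A = a, C = c} / μ{A = a, C = c}, for each θ ∈ ℝ^N_{≥0} let h_θ be a chosen derived predictor for (a,c), and let D_{ac} = ⋂_{θ ∈ ℝ^N_{≥0}} { x ∈ [0,1]^N : Σ_y θ_y s_y x_y ≤ Σ_y θ_y s_y TP_{ac}^y(h_θ) }. Let h* be the Bayes argmax predictor (μ{Y = h*(x,a,c), X = x, A = a, C = c} = max_y μ{Y = y, X = x, A = a, C = c} for all (x,a,c)). Then the convex hull of { e_1, …, e_N, (TP_{ac}^1(h*), …, TP_{ac}^N(h*)) }, where e_y ∈ ℝ^N are the standard basis vectors, is contained in D_{ac}. -/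

import Mathlib

open scoped Classical
open Finset

/-- Probability of an event under a finite mass function `μ`. -/
noncomputable def pr {Ω : Type*} [Fintype Ω] (μ : Ω → ℝ) (P : Ω → Prop) : ℝ :=
  ∑ ω : Ω, if P ω then μ ω else 0

/-- `μ` is a probability mass function on the finite type `Ω`. -/
structure IsProbMass {Ω : Type*} [Fintype Ω] (μ : Ω → ℝ) : Prop where
  nonneg : ∀ ω, 0 ≤ μ ω
  total : ∑ ω : Ω, μ ω = 1

/-- True positive rate of the predictor `h` for class `y`, group `a` and client `c`:
`TP_{ac}^y(h) = μ{h(X,A,C) = y ∧ Y = y ∧ A = a ∧ C = c} / μ{Y = y ∧ A = a ∧ C = c}`. -/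
noncomputable def TP {Ω 𝒳 : Type*} [Fintype Ω] {K N : ℕ} (μ : Ω → ℝ)
    (X : Ω → 𝒳) (A : Ω → Fin 2) (C : Ω → Fin K) (Y : Ω → Fin N)
    (h : 𝒳 × Fin 2 × Fin K → Fin N) (y : Fin N) (a : Fin 2) (c : Fin K) : ℝ :=
  pr μ (fun ω => h (X ω, A ω, C ω) = y ∧ Y ω = y ∧ A ω = a ∧ C ω = c) /
    pr μ (fun ω => Y ω = y ∧ A ω = a ∧ C ω = c)

/-- Bayesian optimal score for group `a`, client `c`:
`r_y(x) = μ{Y = y ∧ X = x ∧ A = a ∧ C = c} / μ{X = x ∧ A = a ∧ C = c}`. -/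
noncomputable def score {Ω 𝒳 : Type*} [Fintype Ω] {K N : ℕ} (μ : Ω → ℝ)
    (X : Ω → 𝒳) (A : Ω → Fin 2) (C : Ω → Fin K) (Y : Ω → Fin N)
    (a : Fin 2) (c : Fin K) (y : Fin N) (x : 𝒳) : ℝ :=
  pr μ (fun ω => Y ω = y ∧ X ω = x ∧ A ω = a ∧ C ω = c) /
    pr μ (fun ω => X ω = x ∧ A ω = a ∧ C ω = c)

/-- `h` is a derived predictor for `(a, c)` and weight vector `θ`:
for every `x` in the support, `θ_{h(x,a,c)} ⬝ r_{h(x,a,c)}(x) = max_y θ_y ⬝ r_y(x)`. -/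
def IsDerivedPredictor {Ω 𝒳 : Type*} [Fintype Ω] {K N : ℕ} (μ : Ω → ℝ)
    (X : Ω → 𝒳) (A : Ω → Fin 2) (C : Ω → Fin K) (Y : Ω → Fin N)
    (a : Fin 2) (c : Fin K) (θ : Fin N → ℝ) (h : 𝒳 × Fin 2 × Fin K → Fin N) : Prop :=
  ∀ x : 𝒳, 0 < pr μ (fun ω => X ω = x ∧ A ω = a ∧ C ω = c) →
    IsGreatest (Set.range fun y => θ y * score μ X A C Y a c y x)
      (θ (h (x, a, c)) * score μ X A C Y a c (h (x, a, c)) x)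

/-- The region under the ROC hypersurface `D_{ac}`, where `hp θ` is the chosen derived
predictor for weight vector `θ`. -/
def RUS {Ω 𝒳 : Type*} [Fintype Ω] {K N : ℕ} (μ : Ω → ℝ)
    (X : Ω → 𝒳) (A : Ω → Fin 2) (C : Ω → Fin K) (Y : Ω → Fin N)
    (a : Fin 2) (c : Fin K)
    (hp : (Fin N → ℝ) → 𝒳 × Fin 2 × Fin K → Fin N) : Set (Fin N → ℝ) :=
  ⋂ θ ∈ {θ : Fin N → ℝ | ∀ y, 0 ≤ θ y},
    {v : Fin N → ℝ | (∀ y, v y ∈ Set.Icc (0 : ℝ) 1) ∧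
      ∑ y : Fin N, θ y * (pr μ (fun ω => Y ω = y ∧ A ω = a ∧ C ω = c) /
          pr μ (fun ω => A ω = a ∧ C ω = c)) * v y ≤
      ∑ y : Fin N, θ y * (pr μ (fun ω => Y ω = y ∧ A ω = a ∧ C ω = c) /
          pr μ (fun ω => A ω = a ∧ C ω = c)) * TP μ X A C Y (hp θ) y a c}

section Aux

variable {Ω : Type*} [Fintype Ω]

lemma pr_nonneg {μ : Ω → ℝ} (hμ : ∀ ω, 0 ≤ μ ω) (P : Ω → Prop) : 0 ≤ pr μ P :=
  Finset.sum_nonneg fun ω _ => by by_cases h : P ω <;> simp [pr, h, hμ ω]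

lemma pr_mono {μ : Ω → ℝ} (hμ : ∀ ω, 0 ≤ μ ω) {P Q : Ω → Prop}
    (h : ∀ ω, P ω → Q ω) : pr μ P ≤ pr μ Q := by
  refine Finset.sum_le_sum fun ω _ => ?_
  by_cases hp : P ω
  · simp [hp, h ω hp]
  · by_cases hq : Q ω <;> simp [hp, hq, hμ ω]

variable {𝒳 : Type*} [Fintype 𝒳] {K N : ℕ} (μ : Ω → ℝ)
  (X : Ω → 𝒳) (A : Ω → Fin 2) (C : Ω → Fin K) (Y : Ω → Fin N)
  (a : Fin 2) (c : Fin K)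

/-- Regrouping the θ-weighted joint-correctness mass by the value of `X`. -/
lemma sum_theta_regroup (θ : Fin N → ℝ) (h : 𝒳 × Fin 2 × Fin K → Fin N) :
    ∑ y : Fin N, θ y *
        pr μ (fun ω => h (X ω, A ω, C ω) = y ∧ Y ω = y ∧ A ω = a ∧ C ω = c) =
      ∑ x : 𝒳, θ (h (x, a, c)) *
        pr μ (fun ω => Y ω = h (x, a, c) ∧ X ω = x ∧ A ω = a ∧ C ω = c) := by
  have L : ∀ y : Fin N, θ y *
      pr μ (fun ω => h (X ω, A ω, C ω) = y ∧ Y ω = y ∧ A ω = a ∧ C ω = c) =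
      ∑ ω : Ω, if h (X ω, A ω, C ω) = y ∧ Y ω = y ∧ A ω = a ∧ C ω = c
        then θ y * μ ω else 0 := by
    intro y
    rw [pr, Finset.mul_sum]
    exact Finset.sum_congr rfl fun ω _ => by split <;> simp
  have R : ∀ x : 𝒳, θ (h (x, a, c)) *
      pr μ (fun ω => Y ω = h (x, a, c) ∧ X ω = x ∧ A ω = a ∧ C ω = c) =
      ∑ ω : Ω, if Y ω = h (x, a, c) ∧ X ω = x ∧ A ω = a ∧ C ω = c
        then θ (h (x, a, c)) * μ ω else 0 := by
    intro x
    rw [pr, Finset.mul_sum]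
    exact Finset.sum_congr rfl fun ω _ => by split <;> simp
  simp only [L, R]
  rw [Finset.sum_comm, Finset.sum_comm (γ := 𝒳)]
  refine Finset.sum_congr rfl fun ω _ => ?_
  rw [Finset.sum_eq_single (Y ω) (fun y _ hy => by
        simp only [ite_eq_right_iff]; rintro ⟨-, rfl, -⟩; exact absurd rfl hy)
      (fun hmem => absurd (Finset.mem_univ _) hmem),
    Finset.sum_eq_single (X ω) (fun x _ hx => by
        simp only [ite_eq_right_iff]; rintro ⟨-, rfl, -⟩; exact absurd rfl hx)
      (fun hmem => absurd (Finset.mem_univ _) hmem)]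
  by_cases hA : A ω = a
  · by_cases hC : C ω = c
    · subst hA; subst hC
      by_cases hh : h (X ω, A ω, C ω) = Y ω
      · rw [if_pos ⟨hh, rfl, rfl, rfl⟩, if_pos ⟨hh.symm, rfl, rfl, rfl⟩, hh]
      · have hh' : ¬ (Y ω = h (X ω, A ω, C ω)) := fun e => hh e.symm
        simp [hh, hh']
    · simp [hC]
  · simp [hA]

/-- The key inequality: for any predictor `h`, the θ-weighted correct mass is at most
that of a derived predictor for θ. -/
lemma key_ineq (hμ : IsProbMass μ) (θ : Fin N → ℝ) (hθ : ∀ y, 0 ≤ θ y)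
    (g : 𝒳 × Fin 2 × Fin K → Fin N)
    (hg : IsDerivedPredictor μ X A C Y a c θ g)
    (h : 𝒳 × Fin 2 × Fin K → Fin N) :
    ∑ y : Fin N, θ y *
        pr μ (fun ω => h (X ω, A ω, C ω) = y ∧ Y ω = y ∧ A ω = a ∧ C ω = c) ≤
      ∑ y : Fin N, θ y *
        pr μ (fun ω => g (X ω, A ω, C ω) = y ∧ Y ω = y ∧ A ω = a ∧ C ω = c) := by
  rw [sum_theta_regroup, sum_theta_regroup]
  refine Finset.sum_le_sum fun x _ => ?_
  by_cases hx : 0 < pr μ (fun ω => X ω = x ∧ A ω = a ∧ C ω = c)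
  · have hne : pr μ (fun ω => X ω = x ∧ A ω = a ∧ C ω = c) ≠ 0 := ne_of_gt hx
    calc θ (h (x, a, c)) *
          pr μ (fun ω => Y ω = h (x, a, c) ∧ X ω = x ∧ A ω = a ∧ C ω = c)
          = θ (h (x, a, c)) * (pr μ (fun ω => Y ω = h (x, a, c) ∧ X ω = x ∧
              A ω = a ∧ C ω = c) / pr μ (fun ω => X ω = x ∧ A ω = a ∧ C ω = c)) *
            pr μ (fun ω => X ω = x ∧ A ω = a ∧ C ω = c) := by
            field_simp
        _ ≤ θ (g (x, a, c)) * (pr μ (fun ω => Y ω = g (x, a, c) ∧ X ω = x ∧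
              A ω = a ∧ C ω = c) / pr μ (fun ω => X ω = x ∧ A ω = a ∧ C ω = c)) *
            pr μ (fun ω => X ω = x ∧ A ω = a ∧ C ω = c) := by
            apply mul_le_mul_of_nonneg_right _ (le_of_lt hx)
            simpa [score] using (hg x hx).2 ⟨h (x, a, c), rfl⟩
        _ = θ (g (x, a, c)) *
            pr μ (fun ω => Y ω = g (x, a, c) ∧ X ω = x ∧ A ω = a ∧ C ω = c) := by
            field_simp
  · have hx0 : pr μ (fun ω => X ω = x ∧ A ω = a ∧ C ω = c) = 0 :=
      le_antisymm (not_lt.1 hx) (pr_nonneg hμ.nonneg _)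
    have hnum : pr μ (fun ω => Y ω = h (x, a, c) ∧ X ω = x ∧ A ω = a ∧ C ω = c) = 0 :=
      le_antisymm (hx0 ▸ pr_mono hμ.nonneg fun ω hw => hw.2) (pr_nonneg hμ.nonneg _)
    rw [hnum, mul_zero]
    exact mul_nonneg (hθ _) (pr_nonneg hμ.nonneg _)

end Aux

/-- inner simplex approximation: the convex hull of the standard basis
vectors `e_1, …, e_N` together with the true-positive vector of the Bayes argmax
predictor is contained in the region under the ROC hypersurface `D_{ac}`. -/
theorem simplex_subset_region_under_ROC
    {Ω 𝒳 : Type*} [Fintype Ω] [Nonempty Ω] [Fintype 𝒳] {K N : ℕ}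
    (hK : 0 < K) (hN : 0 < N)
    (μ : Ω → ℝ) (hμ : IsProbMass μ)
    (X : Ω → 𝒳) (A : Ω → Fin 2) (C : Ω → Fin K) (Y : Ω → Fin N)
    (a : Fin 2) (c : Fin K)
    (hpos : ∀ y : Fin N, 0 < pr μ (fun ω => Y ω = y ∧ A ω = a ∧ C ω = c))
    (hp : (Fin N → ℝ) → 𝒳 × Fin 2 × Fin K → Fin N)
    (hderiv : ∀ θ : Fin N → ℝ, (∀ y, 0 ≤ θ y) →
      IsDerivedPredictor μ X A C Y a c θ (hp θ))
    (hstar : 𝒳 × Fin 2 × Fin K → Fin N)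
    (hopt : ∀ (x : 𝒳) (a' : Fin 2) (c' : Fin K),
      IsGreatest
        (Set.range fun y : Fin N =>
          pr μ (fun ω => Y ω = y ∧ X ω = x ∧ A ω = a' ∧ C ω = c'))
        (pr μ (fun ω =>
          Y ω = hstar (x, a', c') ∧ X ω = x ∧ A ω = a' ∧ C ω = c'))) :
    convexHull ℝ
        ((Set.range fun y : Fin N => (Pi.single y 1 : Fin N → ℝ)) ∪
          {fun y => TP μ X A C Y hstar y a c}) ⊆
      RUS μ X A C Y a c hp := by
  have hPac : 0 < pr μ (fun ω => A ω = a ∧ C ω = c) := by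
    refine lt_of_lt_of_le (hpos ⟨0, hN⟩) (pr_mono hμ.nonneg fun ω hw => hw.2)
  have hPacne : pr μ (fun ω => A ω = a ∧ C ω = c) ≠ 0 := ne_of_gt hPac
  -- the sum Σ_y θ_y s_y TP_y(h) in terms of joint masses
  have hTPsum : ∀ (θ : Fin N → ℝ) (h : 𝒳 × Fin 2 × Fin K → Fin N),
      ∑ y : Fin N, θ y * (pr μ (fun ω => Y ω = y ∧ A ω = a ∧ C ω = c) /
        pr μ (fun ω => A ω = a ∧ C ω = c)) * TP μ X A C Y h y a c =
      (∑ y : Fin N, θ y *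
        pr μ (fun ω => h (X ω, A ω, C ω) = y ∧ Y ω = y ∧ A ω = a ∧ C ω = c)) /
        pr μ (fun ω => A ω = a ∧ C ω = c) := by
    intro θ h
    rw [Finset.sum_div]
    refine Finset.sum_congr rfl fun y _ => ?_
    have hy : pr μ (fun ω => Y ω = y ∧ A ω = a ∧ C ω = c) ≠ 0 := ne_of_gt (hpos y)
    rw [TP]
    field_simp
  -- RUS is convex
  have hconv : Convex ℝ (RUS μ X A C Y a c hp) := by
    refine convex_iInter fun θ => convex_iInter fun _ => ?_
    have h1 : Convex ℝ {v : Fin N → ℝ | ∀ y, v y ∈ Set.Icc (0 : ℝ) 1} := by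
      have : {v : Fin N → ℝ | ∀ y, v y ∈ Set.Icc (0 : ℝ) 1} =
          Set.pi Set.univ (fun _ => Set.Icc (0 : ℝ) 1) := by
        ext v; simp [Set.mem_pi, Pi.le_def, forall_and]
      rw [this]
      exact convex_pi fun _ _ => convex_Icc 0 1
    have h2 : Convex ℝ {v : Fin N → ℝ |
        ∑ y : Fin N, θ y * (pr μ (fun ω => Y ω = y ∧ A ω = a ∧ C ω = c) /
          pr μ (fun ω => A ω = a ∧ C ω = c)) * v y ≤
        ∑ y : Fin N, θ y * (pr μ (fun ω => Y ω = y ∧ A ω = a ∧ C ω = c) /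
          pr μ (fun ω => A ω = a ∧ C ω = c)) * TP μ X A C Y (hp θ) y a c} := by
      refine convex_halfSpace_le ⟨fun u v => ?_, fun r v => ?_⟩ _
      · simp only [Pi.add_apply, mul_add]
        exact Finset.sum_add_distrib
      · simp only [Pi.smul_apply, smul_eq_mul, Finset.mul_sum]
        exact Finset.sum_congr rfl fun y _ => by ring
    exact h1.inter h2
  refine convexHull_min ?_ hconv
  rintro v (⟨y0, rfl⟩ | rfl) <;>
    refine Set.mem_iInter.2 fun θ => Set.mem_iInter.2 fun hθ => ?_
  · -- standard basis vector e_{y0}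
    constructor
    · intro y
      by_cases hy : y = y0
      · subst hy; simp
      · simp [Pi.single_eq_of_ne hy]
    · have hLHS : ∑ y : Fin N, θ y * (pr μ (fun ω => Y ω = y ∧ A ω = a ∧ C ω = c) /
          pr μ (fun ω => A ω = a ∧ C ω = c)) * (Pi.single y0 1 : Fin N → ℝ) y =
          θ y0 * (pr μ (fun ω => Y ω = y0 ∧ A ω = a ∧ C ω = c) /
            pr μ (fun ω => A ω = a ∧ C ω = c)) := by
        rw [Finset.sum_eq_single y0 (fun y _ hy => by
            simp [Pi.single_eq_of_ne hy])
          (fun hmem => absurd (Finset.mem_univ _) hmem)]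
        simp
      rw [hLHS, hTPsum]
      -- compare with the constant predictor `fun _ => y0`
      have hkey := key_ineq μ X A C Y a c hμ θ hθ (hp θ) (hderiv θ hθ)
        (fun _ => y0)
      have hconst : ∑ y : Fin N, θ y *
          pr μ (fun ω => (fun _ : 𝒳 × Fin 2 × Fin K => y0) (X ω, A ω, C ω) = y ∧
            Y ω = y ∧ A ω = a ∧ C ω = c) =
          θ y0 * pr μ (fun ω => Y ω = y0 ∧ A ω = a ∧ C ω = c) := by
        rw [Finset.sum_eq_single y0 (fun y _ hy => by
            have : pr μ (fun ω => y0 = y ∧ Y ω = y ∧ A ω = a ∧ C ω = c) = 0 := by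
              refine Finset.sum_eq_zero fun ω _ => ?_
              simp only [ite_eq_right_iff]
              rintro ⟨rfl, -⟩; exact absurd rfl hy
            simp [this])
          (fun hmem => absurd (Finset.mem_univ _) hmem)]
        congr 1
        exact Finset.sum_congr rfl fun ω _ => by
          by_cases h : Y ω = y0 ∧ A ω = a ∧ C ω = c <;> simp [h]
      rw [hconst] at hkey
      calc θ y0 * (pr μ (fun ω => Y ω = y0 ∧ A ω = a ∧ C ω = c) /
            pr μ (fun ω => A ω = a ∧ C ω = c))
          = θ y0 * pr μ (fun ω => Y ω = y0 ∧ A ω = a ∧ C ω = c) /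
            pr μ (fun ω => A ω = a ∧ C ω = c) := by rw [mul_div_assoc]
        _ ≤ _ := div_le_div_of_nonneg_right hkey (le_of_lt hPac)
  · -- the TP vector of the Bayes predictor
    constructor
    · intro y
      constructor
      · exact div_nonneg (pr_nonneg hμ.nonneg _) (pr_nonneg hμ.nonneg _)
      · exact div_le_one_of_le₀ (pr_mono hμ.nonneg fun ω hw => hw.2)
          (pr_nonneg hμ.nonneg _)
    · rw [hTPsum, hTPsum]
      exact div_le_div_of_nonneg_right
        (key_ineq μ X A C Y a c hμ θ hθ (hp θ) (hderiv θ hθ) hstar) (le_of_lt hPac)
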